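/- For correlations generated by an unsteerable assemblage through any joint POVM, the MDI payoff is bounded: if σ_{a|x} = Σ_λ D(a|x,λ) ρ_λ is unsteerable on C^d, 0 ≤ E ≤ 𝟙 is a POVM element on C^d ⊗ C^d, ω_y are density matrices on C^d, and real coefficients β^{x,y}_a satisfy Σ_y β^{x,y}_a ω_y^⊤ = F_{a|x} − (α/|X|)𝟙 where {F_{a|x} ≥ 0} is a steering witness with LHS bound α = max_{τ∈LHS} tr Σ F_{a|x} τ_{a|x}, then Σ_{a,x,y} β^{x,y}_a tr[E(σ_{a|x} ⊗ ω_y)] ≤ 0. -/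

import Mathlib

open Matrix Kronecker BigOperators
open scoped ComplexOrder

/-- Unsteerable assemblage in deterministic LHS form. -/
def IsUnsteerableDet {d : ℕ} {A X : Type} [Fintype A] [Fintype X]
    [DecidableEq A] [DecidableEq X]
    (τ : A → X → Matrix (Fin d) (Fin d) ℂ) : Prop :=
  ∃ ρ : (X → A) → Matrix (Fin d) (Fin d) ℂ,
    (∀ l, (ρ l).PosSemidef) ∧ (∑ l, (ρ l).trace = 1) ∧
    (∀ a x, τ a x = ∑ l, if l x = a then ρ l else 0)

section Helpers

variable {d : ℕ}

lemma sum4_reorder {M : Type*} [AddCommMonoid M] {n : Type*} [Fintype n]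
    (f : n → n → n → n → M) :
    ∑ j, ∑ l, ∑ i, ∑ k, f i j k l = ∑ i, ∑ j, ∑ k, ∑ l, f i j k l := by
  calc ∑ j, ∑ l, ∑ i, ∑ k, f i j k l
      = ∑ j, ∑ i, ∑ l, ∑ k, f i j k l :=
        Finset.sum_congr rfl fun j _ => Finset.sum_comm
    _ = ∑ i, ∑ j, ∑ l, ∑ k, f i j k l := Finset.sum_comm
    _ = ∑ i, ∑ j, ∑ k, ∑ l, f i j k l :=
        Finset.sum_congr rfl fun i _ => Finset.sum_congr rfl fun j _ => Finset.sum_comm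

lemma sum3_rev {M : Type*} [AddCommMonoid M] {n : Type*} [Fintype n]
    (f : n → n → n → M) :
    ∑ i, ∑ k, ∑ t, f i k t = ∑ t, ∑ k, ∑ i, f i k t := by
  calc ∑ i, ∑ k, ∑ t, f i k t
      = ∑ i, ∑ t, ∑ k, f i k t := Finset.sum_congr rfl fun i _ => Finset.sum_comm
    _ = ∑ t, ∑ i, ∑ k, f i k t := Finset.sum_comm
    _ = ∑ t, ∑ k, ∑ i, f i k t := Finset.sum_congr rfl fun t _ => Finset.sum_comm

/-- effective POVM element on the input system -/
noncomputable def Gm (E : Matrix (Fin d × Fin d) (Fin d × Fin d) ℂ)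
    (ρ : Matrix (Fin d) (Fin d) ℂ) : Matrix (Fin d) (Fin d) ℂ :=
  Matrix.of fun j l => ∑ i, ∑ k, E (i, j) (k, l) * ρ k i

lemma Gm_apply (E : Matrix (Fin d × Fin d) (Fin d × Fin d) ℂ)
    (ρ : Matrix (Fin d) (Fin d) ℂ) (j l : Fin d) :
    Gm E ρ j l = ∑ i, ∑ k, E (i, j) (k, l) * ρ k i := rfl

lemma trace_mul_kron (E : Matrix (Fin d × Fin d) (Fin d × Fin d) ℂ)
    (ρ M : Matrix (Fin d) (Fin d) ℂ) :
    (E * (ρ ⊗ₖ M)).trace = (Gm E ρ * M).trace := by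
  simp only [Matrix.trace, Matrix.diag, Matrix.mul_apply, Gm_apply,
    kroneckerMap_apply, Fintype.sum_prod_type, Finset.sum_mul]
  rw [sum4_reorder (fun i j k l => (E (i, j) (k, l) * ρ k i) * M l j)]
  refine Finset.sum_congr rfl fun i _ => Finset.sum_congr rfl fun j _ =>
    Finset.sum_congr rfl fun k _ => Finset.sum_congr rfl fun l _ => by ring

lemma Gm_sum {ι : Type*} (E : Matrix (Fin d × Fin d) (Fin d × Fin d) ℂ)
    (s : Finset ι) (f : ι → Matrix (Fin d) (Fin d) ℂ) :
    Gm E (∑ i ∈ s, f i) = ∑ i ∈ s, Gm E (f i) := by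
  ext j l
  simp only [Gm_apply, Matrix.sum_apply, Finset.mul_sum]
  calc ∑ i, ∑ k, ∑ t ∈ s, E (i, j) (k, l) * f t k i
      = ∑ i, ∑ t ∈ s, ∑ k, E (i, j) (k, l) * f t k i :=
        Finset.sum_congr rfl fun i _ => Finset.sum_comm
    _ = ∑ t ∈ s, ∑ i, ∑ k, E (i, j) (k, l) * f t k i := Finset.sum_comm

lemma Gm_smul (E : Matrix (Fin d × Fin d) (Fin d × Fin d) ℂ)
    (c : ℂ) (ρ : Matrix (Fin d) (Fin d) ℂ) :
    Gm E (c • ρ) = c • Gm E ρ := by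
  ext j l
  simp only [Gm_apply, Matrix.smul_apply, smul_eq_mul, Finset.mul_sum]
  exact Finset.sum_congr rfl fun i _ => Finset.sum_congr rfl fun k _ => by ring

lemma Gm_posSemidef {E : Matrix (Fin d × Fin d) (Fin d × Fin d) ℂ}
    {ρ : Matrix (Fin d) (Fin d) ℂ} (hE : E.PosSemidef) (hρ : ρ.PosSemidef) :
    (Gm E ρ).PosSemidef := by
  obtain ⟨B, rfl⟩ : ∃ B, ρ = star B * B := by
    open scoped MatrixOrder Matrix.Norms.L2Operator in
    exact CStarAlgebra.nonneg_iff_eq_star_mul_self.mp hρ.nonneg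
  rw [Matrix.star_eq_conjTranspose]
  have key : Gm E (Bᴴ * B) = ∑ s : Fin d,
      (Matrix.of fun (p : Fin d × Fin d) (l' : Fin d) =>
        star (B s p.1) * (if p.2 = l' then 1 else 0))ᴴ * E *
      (Matrix.of fun (p : Fin d × Fin d) (l' : Fin d) =>
        star (B s p.1) * (if p.2 = l' then 1 else 0)) := by
    ext j l
    simp only [Matrix.sum_apply, Matrix.mul_apply, Matrix.conjTranspose_apply,
      Matrix.of_apply, Fintype.sum_prod_type, star_mul', star_star, apply_ite star,
      star_one, star_zero, mul_ite, mul_one, mul_zero, ite_mul, zero_mul,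
      Finset.sum_ite_eq', Finset.mem_univ, if_true, Gm_apply]
    simp only [Finset.mul_sum, Finset.sum_mul]
    rw [sum3_rev (fun i k t => E (i, j) (k, l) * (star (B t k) * B t i))]
    refine Finset.sum_congr rfl fun t _ => Finset.sum_congr rfl fun k _ =>
      Finset.sum_congr rfl fun i _ => by ring
  rw [key]
  exact Finset.sum_induction _ _ (fun a b ha hb => ha.add hb) Matrix.PosSemidef.zero
    (fun s _ => hE.conjTranspose_mul_mul_same _)

lemma psd_diag_nonneg {n : Type*} [Fintype n] [DecidableEq n]
    {M : Matrix n n ℂ} (hM : M.PosSemidef) (i : n) : 0 ≤ M i i := by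
  have := hM.dotProduct_mulVec_nonneg (Pi.single i 1)
  simpa [Matrix.mulVec_single, dotProduct, Pi.single_apply, apply_ite star,
    Finset.sum_ite_eq] using this

lemma psd_trace_nonneg {n : Type*} [Fintype n] [DecidableEq n]
    {M : Matrix n n ℂ} (hM : M.PosSemidef) : 0 ≤ M.trace :=
  Finset.sum_nonneg fun i _ => psd_diag_nonneg hM i

lemma psd_trace_real {n : Type*} [Fintype n] [DecidableEq n]
    {M : Matrix n n ℂ} (hM : M.PosSemidef) : M.trace = (M.trace.re : ℂ) := by
  have h := psd_trace_nonneg hM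
  rw [Complex.le_def] at h
  exact Complex.ext rfl (by simpa using h.2.symm)

lemma psd_trace_re_zero {n : Type*} [Fintype n] [DecidableEq n]
    {M : Matrix n n ℂ} (hM : M.PosSemidef) (h : M.trace.re = 0) : M = 0 := by
  obtain ⟨B, rfl⟩ : ∃ B, M = star B * B := by
    open scoped MatrixOrder Matrix.Norms.L2Operator in
    exact CStarAlgebra.nonneg_iff_eq_star_mul_self.mp hM.nonneg
  rw [Matrix.star_eq_conjTranspose] at h ⊢
  have hB : B = 0 := by
    have htr : ((Bᴴ * B).trace).re = ∑ i, ∑ s, Complex.normSq (B s i) := by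
      simp only [Matrix.trace, Matrix.diag, Matrix.mul_apply, Matrix.conjTranspose_apply,
        Complex.re_sum]
      refine Finset.sum_congr rfl fun i _ => Finset.sum_congr rfl fun s _ => ?_
      simp [Complex.normSq_apply, Complex.mul_re]
    rw [htr] at h
    have hz : ∀ i ∈ Finset.univ, ∀ s ∈ (Finset.univ : Finset _), Complex.normSq (B s i) = 0 := by
      intro i _ s _
      have h1 := (Finset.sum_eq_zero_iff_of_nonneg (fun i _ =>
        Finset.sum_nonneg fun s _ => Complex.normSq_nonneg _)).mp h i (Finset.mem_univ i)
      exact (Finset.sum_eq_zero_iff_of_nonneg (fun s _ => Complex.normSq_nonneg _)).mp h1 s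
        (Finset.mem_univ s)
    ext s i
    simpa [Complex.normSq_eq_zero] using hz i (Finset.mem_univ i) s (Finset.mem_univ s)
  simp [hB]

lemma psd_real_smul {n : Type*} [Fintype n]
    {M : Matrix n n ℂ} (hM : M.PosSemidef) {c : ℝ} (hc : 0 ≤ c) :
    ((c : ℂ) • M).PosSemidef := by
  rw [Matrix.posSemidef_iff_dotProduct_mulVec]
  constructor
  · rw [Matrix.IsHermitian, Matrix.conjTranspose_smul, hM.1]
    congr 1
    simp
  · intro x
    have h := hM.dotProduct_mulVec_nonneg x
    rw [Matrix.smul_mulVec, dotProduct_smul]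
    rw [Complex.le_def] at h ⊢
    constructor
    · simpa [Complex.mul_re] using mul_nonneg hc h.1
    · simp only [smul_eq_mul, Complex.mul_im, Complex.ofReal_re, Complex.ofReal_im,
        Complex.zero_im, zero_mul, add_zero] at *
      rw [← h.2]; ring

lemma Gm_zero (E : Matrix (Fin d × Fin d) (Fin d × Fin d) ℂ) :
    Gm E (0 : Matrix (Fin d) (Fin d) ℂ) = 0 := by
  ext j l; simp [Gm_apply]

end Helpers

/-- For correlations generated by an unsteerable assemblage through any joint POVM
element, the MDI payoff built from a steering witness via the spanning relation
`∑_y β^{x,y}_a ω_yᵀ = F_{a|x} − (α/|X|)𝟙` is nonpositive. -/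
theorem mdi_payoff_nonpos_on_unsteerable
    {d : ℕ} {A X Y : Type} [Fintype A] [Fintype X] [Fintype Y]
    [DecidableEq A] [DecidableEq X]
    (σ : A → X → Matrix (Fin d) (Fin d) ℂ)
    (hσ : IsUnsteerableDet σ)
    (E : Matrix (Fin d × Fin d) (Fin d × Fin d) ℂ)
    (hE : E.PosSemidef) (hE1 : (1 - E).PosSemidef)
    (ω : Y → Matrix (Fin d) (Fin d) ℂ)
    (hωpos : ∀ y, (ω y).PosSemidef) (hωtr : ∀ y, (ω y).trace = 1)
    (F : A → X → Matrix (Fin d) (Fin d) ℂ)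
    (hF : ∀ a x, (F a x).PosSemidef)
    (α : ℝ)
    (hα : IsGreatest {t : ℝ | ∃ τ : A → X → Matrix (Fin d) (Fin d) ℂ,
      IsUnsteerableDet τ ∧ t = (∑ a, ∑ x, (F a x * τ a x).trace).re} α)
    (β : A → X → Y → ℝ)
    (hβ : ∀ a x, ∑ y, β a x y • (ω y)ᵀ
      = F a x - ((α / (Fintype.card X) : ℝ) : ℂ) • 1) :
    (∑ a, ∑ x, ∑ y, (β a x y : ℂ) * (E * (σ a x ⊗ₖ ω y)).trace).re ≤ 0 := by
  classical
  rcases isEmpty_or_nonempty X with hX | hX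
  · simp
  obtain ⟨ρ, hρpos, hρtr, hρrep⟩ := hσ
  set c : ℂ := ((α / (Fintype.card X) : ℝ) : ℂ) with hc
  set G : (X → A) → Matrix (Fin d) (Fin d) ℂ := fun l => Gm E (ρ l) with hG
  have hGpsd : ∀ l, (G l).PosSemidef := fun l => Gm_posSemidef hE (hρpos l)
  set T : ℂ := ∑ l, (G l).trace with hT
  set t : ℝ := T.re with ht
  have hTt : T = (t : ℂ) := by
    rw [ht, hT, Complex.re_sum]
    push_cast
    exact Finset.sum_congr rfl fun l _ => psd_trace_real (hGpsd l)
  have ht0 : 0 ≤ t := by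
    rw [ht, hT, Complex.re_sum]
    exact Finset.sum_nonneg fun l _ =>
      (Complex.le_def.mp (psd_trace_nonneg (hGpsd l))).1
  set τ : A → X → Matrix (Fin d) (Fin d) ℂ :=
    fun a x => ∑ l, if l x = a then (G l)ᵀ else 0 with hτ
  set S : ℂ := ∑ a, ∑ x, (F a x * τ a x).trace with hS
  -- decomposition of Gm of the assemblage
  have hGmσ : ∀ a x, Gm E (σ a x) = ∑ l, if l x = a then G l else 0 := by
    intro a x
    rw [hρrep a x, Gm_sum]
    refine Finset.sum_congr rfl fun l _ => ?_
    by_cases h : l x = a <;> simp [h, hG, Gm_zero]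
  have hstep1 : (∑ a, ∑ x, ∑ y, (β a x y : ℂ) * (E * (σ a x ⊗ₖ ω y)).trace)
      = S - (α : ℂ) * T := by
    have hω : ∀ a x, ∑ y, (β a x y : ℂ) • ω y = (F a x)ᵀ - c • (1 : Matrix (Fin d) (Fin d) ℂ) := by
      intro a x
      have h := congrArg Matrix.transpose (hβ a x)
      rw [Matrix.transpose_sum, Matrix.transpose_sub, Matrix.transpose_smul,
        Matrix.transpose_one] at h
      rw [← h]
      refine Finset.sum_congr rfl fun y _ => ?_
      rw [Matrix.transpose_smul, Matrix.transpose_transpose]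
      ext i j
      simp [Complex.real_smul]
    have hsum_y : ∀ a x, (∑ y, (β a x y : ℂ) * (E * (σ a x ⊗ₖ ω y)).trace)
        = ((F a x) * (τ a x)).trace - c * (Gm E (σ a x)).trace := by
      intro a x
      have h1 : (∑ y, (β a x y : ℂ) * (E * (σ a x ⊗ₖ ω y)).trace)
          = (Gm E (σ a x) * ((F a x)ᵀ - c • (1 : Matrix (Fin d) (Fin d) ℂ))).trace := by
        rw [← hω a x, Matrix.mul_sum, Matrix.trace_sum]
        refine Finset.sum_congr rfl fun y _ => ?_
        rw [trace_mul_kron, Matrix.mul_smul, Matrix.trace_smul]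
        simp
      rw [h1, Matrix.mul_sub, Matrix.trace_sub, Matrix.mul_smul, Matrix.mul_one,
        Matrix.trace_smul, smul_eq_mul]
      have hTT : (Gm E (σ a x))ᵀ = τ a x := by
        rw [hGmσ a x, Matrix.transpose_sum, hτ]
        refine Finset.sum_congr rfl fun l _ => ?_
        by_cases h : l x = a <;> simp [h]
      rw [← hTT, ← Matrix.trace_transpose (Gm E (σ a x) * (F a x)ᵀ),
        Matrix.transpose_mul, Matrix.transpose_transpose]
    calc (∑ a, ∑ x, ∑ y, (β a x y : ℂ) * (E * (σ a x ⊗ₖ ω y)).trace)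
        = ∑ a, ∑ x, (((F a x) * (τ a x)).trace - c * (Gm E (σ a x)).trace) := by
          exact Finset.sum_congr rfl fun a _ => Finset.sum_congr rfl fun x _ => hsum_y a x
      _ = S - c * ∑ a, ∑ x, (Gm E (σ a x)).trace := by
          simp only [Finset.sum_sub_distrib, Finset.mul_sum, hS]
      _ = S - (α : ℂ) * T := by
          have h1 : ∀ (a : A) (x : X),
              (Gm E (σ a x)).trace = ∑ l, if l x = a then (G l).trace else 0 := by
            intro a x
            rw [hGmσ a x, Matrix.trace_sum]
            exact Finset.sum_congr rfl fun l _ => by by_cases h : l x = a <;> simp [h]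
          have h2 : ∀ x : X, (∑ a, ∑ l, if l x = a then (G l).trace else 0) = T := by
            intro x
            rw [Finset.sum_comm, hT]
            exact Finset.sum_congr rfl fun l _ => by simp
          have hQ : (∑ a, ∑ x, (Gm E (σ a x)).trace) = (Fintype.card X : ℂ) * T := by
            simp only [h1]
            rw [Finset.sum_comm]
            simp only [h2]
            simp [Finset.sum_const, Finset.card_univ, nsmul_eq_mul]
          rw [hQ, hc]
          congr 1
          rw [← mul_assoc]
          congr 1
          have hcard : (Fintype.card X : ℝ) ≠ 0 := by
            exact_mod_cast Fintype.card_ne_zero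
          push_cast
          field_simp
  have hstep2 : S.re ≤ α * t := by
    rcases eq_or_lt_of_le ht0 with h0 | hpos
    · -- t = 0 : all G l vanish
      have hsum : (∑ l, ((G l).trace).re) = 0 := by
        rw [← Complex.re_sum, ← hT, ← ht, ← h0]
      have hnn : ∀ l ∈ (Finset.univ : Finset (X → A)), 0 ≤ ((G l).trace).re := fun l _ =>
        (Complex.le_def.mp (psd_trace_nonneg (hGpsd l))).1
      have hz : ∀ l, G l = 0 := fun l =>
        psd_trace_re_zero (hGpsd l)
          ((Finset.sum_eq_zero_iff_of_nonneg hnn).mp hsum l (Finset.mem_univ l))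
      have hS0 : S = 0 := by
        rw [hS]
        refine Finset.sum_eq_zero fun a _ => Finset.sum_eq_zero fun x _ => ?_
        have hτ0 : τ a x = 0 := by
          rw [hτ]
          exact Finset.sum_eq_zero fun l _ => by simp [hz l]
        simp [hτ0]
      rw [hS0, ← h0]
      simp
    · -- t > 0 : rescale to a normalized unsteerable assemblage
      have htne : (t : ℝ) ≠ 0 := ne_of_gt hpos
      set ρ' : (X → A) → Matrix (Fin d) (Fin d) ℂ :=
        fun l => ((t⁻¹ : ℝ) : ℂ) • (G l)ᵀ with hρ'
      set τ' : A → X → Matrix (Fin d) (Fin d) ℂ :=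
        fun a x => ∑ l, if l x = a then ρ' l else 0 with hτ'
      have hτ'eq : ∀ a x, τ' a x = ((t⁻¹ : ℝ) : ℂ) • τ a x := by
        intro a x
        rw [hτ', hτ, Finset.smul_sum]
        refine Finset.sum_congr rfl fun l _ => ?_
        by_cases h : l x = a <;> simp [h, hρ']
      have hval : (∑ a, ∑ x, (F a x * τ' a x).trace).re = t⁻¹ * S.re := by
        have : (∑ a, ∑ x, (F a x * τ' a x).trace) = ((t⁻¹ : ℝ) : ℂ) * S := by
          rw [hS, Finset.mul_sum]
          refine Finset.sum_congr rfl fun a _ => ?_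
          rw [Finset.mul_sum]
          refine Finset.sum_congr rfl fun x _ => ?_
          rw [hτ'eq a x, Matrix.mul_smul, Matrix.trace_smul, smul_eq_mul]
        rw [this]
        simp [Complex.mul_re]
      have hmem : t⁻¹ * S.re ∈ {r : ℝ | ∃ τ : A → X → Matrix (Fin d) (Fin d) ℂ,
          IsUnsteerableDet τ ∧ r = (∑ a, ∑ x, (F a x * τ a x).trace).re} := by
        refine ⟨τ', ⟨ρ', fun l => psd_real_smul ((hGpsd l).transpose)
          (inv_nonneg.mpr ht0), ?_, fun a x => rfl⟩, hval.symm⟩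
        rw [hρ']
        simp only [Matrix.trace_smul, ← Finset.smul_sum]
        have htr : (∑ l, ((G l)ᵀ).trace) = T := by
          rw [hT]
          exact Finset.sum_congr rfl fun l _ => Matrix.trace_transpose _
        rw [htr, hTt, smul_eq_mul]
        push_cast
        field_simp
      have hle := hα.2 hmem
      calc S.re = t * (t⁻¹ * S.re) := by field_simp
        _ ≤ t * α := by exact mul_le_mul_of_nonneg_left hle ht0
        _ = α * t := mul_comm _ _
  rw [hstep1]
  have : ((α : ℂ) * T).re = α * t := by rw [hTt]; push_cast; simp
  rw [Complex.sub_re, this]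
  linarith
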